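/- arXiv:0706.1701 — 2 statements merged into one kernel-verified Lean document; each statement's English description precedes it below -/
import Mathlib

section
/- Let R_k ⊆ V^k be the relation of walks of length k−1 in a d-regular graph G on vertex set V (k ≥ 3), and suppose R_{k-1} is an ε(k−2)-expander and R₂ is an ε-expander relation. Then for any functions x₁,…,x_k : V → [0,1], |R_k(x₁,…,x_k) − |R_k|·∏_{i=1}^k |xᵢ|₁/|V|^k| < (k−1)·ε·|R_k|. -/
open Finset

attribute [local instance] Classical.propDecidable

/-- `R(S₁,…,S_r)`: the number of tuples of `R` whose `i`-th coordinate lies in `T i`. -/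
noncomputable def relCount {S : Type*} {r : ℕ} (R : Finset (Fin r → S))
    (T : Fin r → Finset S) : ℝ :=
  ((R.filter fun t => ∀ i, t i ∈ T i).card : ℝ)

/-- `R(f₁,…,f_r) = Σ_{(x₁,…,x_r)∈R} ∏ᵢ fᵢ(xᵢ)`. -/
noncomputable def relApply {S : Type*} {r : ℕ} (R : Finset (Fin r → S))
    (f : Fin r → S → ℝ) : ℝ :=
  ∑ t ∈ R, ∏ i, f i (t i)

/-- `R` is an ε-expander relation. -/
def IsExpanderRel {S : Type*} [Fintype S] {r : ℕ} (ε : ℝ) (R : Finset (Fin r → S)) : Prop :=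
  ∀ T : Fin r → Finset S,
    |relCount R T - (R.card : ℝ) * (∏ i, ((T i).card : ℝ)) / (Fintype.card S : ℝ) ^ r|
      < ε * R.card


/-- `R_k`: the `k`-ary relation of walks of length `k-1` in `G`. -/
noncomputable def walkRel {V : Type*} [Fintype V] (G : SimpleGraph V) (k : ℕ) :
    Finset (Fin k → V) :=
  Finset.univ.filter fun t =>
    ∀ i : Fin k, ∀ h : (i : ℕ) + 1 < k, G.Adj (t i) (t ⟨(i : ℕ) + 1, h⟩)

/-- `R` is a δ-expander in the functional sense: the inequality with maxima holds for all
nonzero nonnegative functions. -/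
def IsExpanderFun {S : Type*} [Fintype S] {r : ℕ} (δ : ℝ) (R : Finset (Fin r → S)) : Prop :=
  ∀ f : Fin r → S → ℝ, (∀ i x, 0 ≤ f i x) → (∀ i, ∃ x, f i x ≠ 0) →
    |relApply R f - (R.card : ℝ) * (∏ i, ∑ x, |f i x|) / (Fintype.card S : ℝ) ^ r|
      < δ * R.card * ∏ i, ⨆ x, f i x

section Helpers

variable {V : Type*} [Fintype V] (G : SimpleGraph V)

lemma walkRel_one : walkRel G 1 = Finset.univ := by
  ext t
  simp only [walkRel, Finset.mem_filter, Finset.mem_univ, true_and, iff_true]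
  intro i h
  omega

lemma cons_mem_walkRel (n : ℕ) (a : V) (s : Fin (n+1) → V) :
    Fin.cons a s ∈ walkRel G (n+2) ↔ G.Adj a (s 0) ∧ s ∈ walkRel G (n+1) := by
  simp only [walkRel, Finset.mem_filter, Finset.mem_univ, true_and]
  constructor
  · intro h
    refine ⟨?_, ?_⟩
    · have h0 := h 0 (by simp only [Fin.val_zero]; omega)
      have e1 : (⟨(0:Fin (n+2)).val + 1, by simp only [Fin.val_zero]; omega⟩ : Fin (n+2)) = Fin.succ 0 := by
        ext; simp
      rw [e1] at h0
      simpa using h0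
    · intro j hj
      have hj' : (j.succ : ℕ) + 1 < n + 2 := by simp only [Fin.val_succ]; omega
      have h1 := h j.succ hj'
      have e2 : (⟨(j.succ : ℕ) + 1, hj'⟩ : Fin (n+2)) = Fin.succ ⟨(j:ℕ)+1, hj⟩ := by
        ext; simp
      rw [e2, Fin.cons_succ, Fin.cons_succ] at h1
      exact h1
  · rintro ⟨ha, hs⟩ i hi
    rcases Fin.eq_zero_or_eq_succ i with rfl | ⟨j, rfl⟩
    · have e1 : (⟨(0:Fin (n+2)).val + 1, hi⟩ : Fin (n+2)) = Fin.succ 0 := by ext; simp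
      rw [e1, Fin.cons_succ, Fin.cons_zero]
      exact ha
    · have hj : (j : ℕ) + 1 < n + 1 := by
        simp only [Fin.val_succ] at hi; omega
      have e2 : (⟨(j.succ : ℕ) + 1, hi⟩ : Fin (n+2)) = Fin.succ ⟨(j:ℕ)+1, hj⟩ := by
        ext; simp
      rw [e2, Fin.cons_succ, Fin.cons_succ]
      exact hs j hj

lemma sum_walkRel_succ (n : ℕ) (F : (Fin (n+2) → V) → ℝ) :
    ∑ t ∈ walkRel G (n+2), F t
      = ∑ s ∈ walkRel G (n+1), ∑ a ∈ G.neighborFinset (s 0), F (Fin.cons a s) := by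
  classical
  have h1 : ∑ t ∈ walkRel G (n+2), F t
      = ∑ t : Fin (n+2) → V, if t ∈ walkRel G (n+2) then F t else 0 := by
    rw [Finset.sum_ite_mem, Finset.univ_inter]
  have h2 : ∑ t : Fin (n+2) → V, (if t ∈ walkRel G (n+2) then F t else 0)
      = ∑ p : V × (Fin (n+1) → V),
          (if Fin.cons p.1 p.2 ∈ walkRel G (n+2) then F (Fin.cons p.1 p.2) else 0) := by
    exact (Fintype.sum_equiv (Fin.consEquiv (fun _ => V))
      (fun p => if Fin.cons p.1 p.2 ∈ walkRel G (n+2) then F (Fin.cons p.1 p.2) else 0)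
      (fun t => if t ∈ walkRel G (n+2) then F t else 0) (fun p => rfl)).symm
  rw [h1, h2, Fintype.sum_prod_type]
  have h3 : ∀ a : V, ∀ s : Fin (n+1) → V,
      (if Fin.cons a s ∈ walkRel G (n+2) then F (Fin.cons a s) else 0)
      = if s ∈ walkRel G (n+1) then (if G.Adj a (s 0) then F (Fin.cons a s) else 0)
        else 0 := by
    intro a s
    by_cases hs : s ∈ walkRel G (n+1) <;> by_cases ha : G.Adj a (s 0) <;>
      simp [cons_mem_walkRel, hs, ha]
  simp_rw [h3]
  calc ∑ a : V, ∑ s : Fin (n+1) → V,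
        (if s ∈ walkRel G (n+1) then (if G.Adj a (s 0) then F (Fin.cons a s) else 0) else 0)
      = ∑ a : V, ∑ s ∈ walkRel G (n+1), (if G.Adj a (s 0) then F (Fin.cons a s) else 0) := by
        refine Finset.sum_congr rfl fun a _ => ?_
        rw [Finset.sum_ite_mem, Finset.univ_inter]
    _ = ∑ s ∈ walkRel G (n+1), ∑ a : V, (if G.Adj a (s 0) then F (Fin.cons a s) else 0) :=
        Finset.sum_comm
    _ = ∑ s ∈ walkRel G (n+1), ∑ a ∈ G.neighborFinset (s 0), F (Fin.cons a s) := by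
        refine Finset.sum_congr rfl fun s _ => ?_
        rw [← Finset.sum_filter]
        congr 1
        rw [SimpleGraph.neighborFinset_eq_filter]
        apply Finset.filter_congr
        intro a _
        constructor <;> intro h <;> exact h.symm

lemma card_walkRel (n : ℕ) {d : ℕ} (hreg : G.IsRegularOfDegree d) :
    ((walkRel G (n+1)).card : ℝ) = (d:ℝ)^n * (Fintype.card V : ℝ) := by
  induction n with
  | zero =>
    rw [walkRel_one, Finset.card_univ]
    simp
  | succ n ih =>
    have h := sum_walkRel_succ G n (fun _ => (1:ℝ))
    simp only [Finset.sum_const, nsmul_eq_mul, mul_one] at h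
    have hdeg : ∀ v : V, ((G.neighborFinset v).card : ℝ) = (d:ℝ) := by
      intro v
      have := hreg v
      rw [SimpleGraph.degree] at this
      exact_mod_cast this
    rw [h]
    simp_rw [hdeg]
    rw [Finset.sum_const, nsmul_eq_mul, ih]
    ring

lemma relApply_two (f : Fin 2 → V → ℝ) :
    relApply (walkRel G 2) f = ∑ v : V, f 1 v * ∑ a ∈ G.neighborFinset v, f 0 a := by
  have key := sum_walkRel_succ G 0 (fun t => ∏ i : Fin 2, f i (t i))
  rw [walkRel_one] at key
  rw [relApply]
  refine key.trans ?_
  refine Fintype.sum_equiv (Equiv.funUnique (Fin 1) V) _ _ fun s => ?_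
  have hp : ∀ a : V, ∏ i : Fin 2, f i ((Fin.cons a s : Fin 2 → V) i) = f 0 a * f 1 (s 0) := by
    intro a
    rw [Fin.prod_univ_two]
    rfl
  simp_rw [hp]
  rw [← Finset.sum_mul, mul_comm]
  rfl

lemma expander_weak {S : Type*} [Fintype S] [Nonempty S] {r : ℕ} {δ : ℝ}
    {R : Finset (Fin r → S)}
    (hR : IsExpanderFun δ R) (hδ : 0 ≤ δ) (f : Fin r → S → ℝ) (hf : ∀ i x, 0 ≤ f i x) :
    |relApply R f - (R.card : ℝ) * (∏ i, ∑ x, |f i x|) / (Fintype.card S : ℝ) ^ r|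
      ≤ δ * R.card * ∏ i, ⨆ x, f i x := by
  by_cases h : ∀ i, ∃ x, f i x ≠ 0
  · exact (hR f hf h).le
  · push_neg at h
    obtain ⟨i, hi⟩ := h
    have h1 : relApply R f = 0 := Finset.sum_eq_zero fun t _ =>
      Finset.prod_eq_zero (Finset.mem_univ i) (hi (t i))
    have h2 : (∏ j, ∑ x, |f j x|) = 0 :=
      Finset.prod_eq_zero (Finset.mem_univ i) (by simp [hi])
    rw [h1, h2, mul_zero, zero_div, sub_zero, abs_zero]
    have hsup : ∀ j, 0 ≤ ⨆ x, f j x := fun j => Real.iSup_nonneg (fun x => hf j x)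
    have := Finset.prod_nonneg (fun j (_ : j ∈ Finset.univ) => hsup j)
    have hc : (0:ℝ) ≤ R.card := Nat.cast_nonneg _
    exact mul_nonneg (mul_nonneg hδ hc) this

end Helpers
/-- Inductive step: if `R_{k-1}` is an `ε(k-2)`-expander and `R₂` is an `ε`-expander,
then for all `[0,1]`-valued functions `x₁,…,x_k`,
`|R_k(x₁,…,x_k) − |R_k|·∏|xᵢ|₁/|V|^k| < (k−1)·ε·|R_k|`. -/
theorem walkRel_inductive_step
    {V : Type*} [Fintype V] [Nonempty V]
    (G : SimpleGraph V) (d : ℕ) (hd : 0 < d) (hreg : G.IsRegularOfDegree d)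
    (k : ℕ) (hk : 3 ≤ k) (ε : ℝ) (hε : 0 < ε)
    (hprev : IsExpanderFun (ε * ((k : ℝ) - 2)) (walkRel G (k - 1)))
    (h2 : IsExpanderFun ε (walkRel G 2))
    (x : Fin k → V → ℝ) (hx0 : ∀ i v, 0 ≤ x i v) (hx1 : ∀ i v, x i v ≤ 1) :
    |relApply (walkRel G k) x -
        ((walkRel G k).card : ℝ) * (∏ i, ∑ v, |x i v|) / (Fintype.card V : ℝ) ^ k|
      < ((k : ℝ) - 1) * ε * (walkRel G k).card := by

  obtain ⟨m, rfl⟩ : ∃ m, k = m + 3 := ⟨k - 3, by omega⟩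
  clear hk
  set N : ℝ := (Fintype.card V : ℝ) with hNdef
  have hN0 : 0 < N := by
    rw [hNdef]
    exact_mod_cast Fintype.card_pos (α := V)
  have hD0 : (0:ℝ) < (d:ℝ) := by exact_mod_cast hd
  have cK : ((walkRel G (m+3)).card : ℝ) = (d:ℝ)^(m+2) * N := card_walkRel G (m+2) hreg
  have cn : ((walkRel G (m+2)).card : ℝ) = (d:ℝ)^(m+1) * N := card_walkRel G (m+1) hreg
  have c2 : ((walkRel G 2).card : ℝ) = (d:ℝ) * N := by
    have := card_walkRel G 1 hreg
    rw [pow_one] at this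
    exact this
  have hK0 : (0:ℝ) < ((walkRel G (m+3)).card : ℝ) := by rw [cK]; positivity
  have hcoef : (0:ℝ) < ((m+3:ℕ):ℝ) - 1 := by push_cast; linarith
  by_cases hxz : ∀ i, ∃ v, x i v ≠ 0
  case neg =>
    push_neg at hxz
    obtain ⟨i, hi⟩ := hxz
    have h1 : relApply (walkRel G (m+3)) x = 0 := Finset.sum_eq_zero fun t _ =>
      Finset.prod_eq_zero (Finset.mem_univ i) (hi (t i))
    have h2 : (∏ j, ∑ v, |x j v|) = 0 :=
      Finset.prod_eq_zero (Finset.mem_univ i) (by simp [hi])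
    rw [h1, h2, mul_zero, zero_div, sub_zero, abs_zero]
    exact mul_pos (mul_pos hcoef hε) hK0
  case pos =>
  have habs : ∀ (i : Fin (m+3)) v, |x i v| = x i v := fun i v => abs_of_nonneg (hx0 i v)
  have hL0 : ∀ i : Fin (m+3), (0:ℝ) < ∑ v, |x i v| := by
    intro i
    obtain ⟨v, hv⟩ := hxz i
    exact Finset.sum_pos' (fun w _ => abs_nonneg _) ⟨v, Finset.mem_univ v, abs_pos.mpr hv⟩
  have hL1 : ∀ i : Fin (m+3), (∑ v, |x i v|) ≤ N := by
    intro i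
    calc ∑ v, |x i v| ≤ ∑ _v : V, (1:ℝ) := by
          refine Finset.sum_le_sum fun v _ => ?_
          rw [habs]
          exact hx1 i v
      _ = N := by rw [Finset.sum_const, nsmul_eq_mul, mul_one, Finset.card_univ]
  set g : V → ℝ := fun v => x 1 v * ∑ a ∈ G.neighborFinset v, x 0 a with hgdef
  set y : Fin (m+2) → V → ℝ := Fin.cons g (fun j => x j.succ.succ) with hydef
  have hy0 : y 0 = g := rfl
  have hys : ∀ j : Fin (m+1), y j.succ = x j.succ.succ := fun j => by
    rw [hydef, Fin.cons_succ]
  have hdeg : ∀ v : V, ((G.neighborFinset v).card : ℝ) = (d:ℝ) := by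
    intro v
    have := hreg v
    rw [SimpleGraph.degree] at this
    exact_mod_cast this
  have hgnn : ∀ v, 0 ≤ g v := fun v =>
    mul_nonneg (hx0 1 v) (Finset.sum_nonneg fun a _ => hx0 0 a)
  have hgle : ∀ v, g v ≤ (d:ℝ) := by
    intro v
    have hS0 : (0:ℝ) ≤ ∑ a ∈ G.neighborFinset v, x 0 a :=
      Finset.sum_nonneg fun a _ => hx0 0 a
    have hS : ∑ a ∈ G.neighborFinset v, x 0 a ≤ (d:ℝ) := by
      calc ∑ a ∈ G.neighborFinset v, x 0 a ≤ ∑ _a ∈ G.neighborFinset v, (1:ℝ) :=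
            Finset.sum_le_sum fun a _ => hx1 0 a
        _ = (d:ℝ) := by rw [Finset.sum_const, nsmul_eq_mul, mul_one, hdeg]
    calc g v ≤ 1 * (∑ a ∈ G.neighborFinset v, x 0 a) :=
          mul_le_mul_of_nonneg_right (hx1 1 v) hS0
      _ ≤ (d:ℝ) := by rw [one_mul]; exact hS
  have hynn : ∀ (j : Fin (m+2)) v, 0 ≤ y j v := by
    intro j
    induction j using Fin.cases with
    | zero => exact hgnn
    | succ j => intro v; rw [hys]; exact hx0 _ v
  have step1 : relApply (walkRel G (m+3)) x = relApply (walkRel G (m+2)) y := by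
    rw [relApply, relApply]
    have key := sum_walkRel_succ G (m+1) (fun t => ∏ i : Fin (m+3), x i (t i))
    refine key.trans ?_
    refine Finset.sum_congr rfl fun s _ => ?_
    have e1 : ∀ a : V, ∏ i : Fin (m+3), x i ((Fin.cons a s : Fin (m+3) → V) i)
        = x 0 a * (x 1 (s 0) * ∏ j : Fin (m+1), x j.succ.succ (s j.succ)) := by
      intro a
      rw [Fin.prod_univ_succ]
      simp only [Fin.cons_zero, Fin.cons_succ]
      rw [Fin.prod_univ_succ, Fin.succ_zero_eq_one]
    simp_rw [e1]
    rw [← Finset.sum_mul, Fin.prod_univ_succ (f := fun j : Fin (m+2) => y j (s j))]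
    simp only [hy0, hys]
    simp only [hgdef]
    ring
  set f2 : Fin 2 → V → ℝ := Fin.cons (x 0) (fun _ => x 1) with hf2def
  have hf20 : f2 0 = x 0 := rfl
  have hf21 : f2 1 = x 1 := rfl
  have step2 : ∑ v, |g v| = relApply (walkRel G 2) f2 := by
    rw [relApply_two]
    refine Finset.sum_congr rfl fun v _ => ?_
    rw [abs_of_nonneg (hgnn v), hf20, hf21, hgdef]
  have hf2nn : ∀ i v, 0 ≤ f2 i v := by
    intro i
    induction i using Fin.cases with
    | zero => exact hx0 0
    | succ j => exact hx0 1
  have hf2nz : ∀ i, ∃ v, f2 i v ≠ 0 := by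
    intro i
    induction i using Fin.cases with
    | zero => exact hxz 0
    | succ j => exact hxz 1
  have hf2sup : (∏ i, ⨆ v, f2 i v) ≤ 1 := by
    refine Finset.prod_le_one (fun i _ => Real.iSup_nonneg (fun v => hf2nn i v)) ?_
    intro i _
    refine ciSup_le fun v => ?_
    induction i using Fin.cases with
    | zero => exact hx1 0 v
    | succ j => exact hx1 1 v
  have hE2 : |relApply (walkRel G 2) f2
      - ((walkRel G 2).card : ℝ) * (∏ i, ∑ v, |f2 i v|) / N ^ 2|
      < ε * ((d:ℝ) * N) := by
    calc |relApply (walkRel G 2) f2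
        - ((walkRel G 2).card : ℝ) * (∏ i, ∑ v, |f2 i v|) / N ^ 2|
        < ε * ((walkRel G 2).card : ℝ) * ∏ i, ⨆ v, f2 i v := h2 f2 hf2nn hf2nz
      _ ≤ ε * ((walkRel G 2).card : ℝ) * 1 := by
          refine mul_le_mul_of_nonneg_left hf2sup ?_
          positivity
      _ = ε * ((d:ℝ) * N) := by rw [mul_one, c2]
  have hprod2 : (∏ i, ∑ v, |f2 i v|) = (∑ v, |x 0 v|) * (∑ v, |x 1 v|) := by
    rw [Fin.prod_univ_two, hf20, hf21]
  have hδnn : (0:ℝ) ≤ ε * (((m+3:ℕ):ℝ) - 2) := by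
    have h23 : (0:ℝ) ≤ (((m+3:ℕ):ℝ) - 2) := by push_cast; linarith
    exact mul_nonneg hε.le h23
  have hprev' : IsExpanderFun (ε * (((m+3:ℕ):ℝ) - 2)) (walkRel G (m+2)) := hprev
  have hE1 := expander_weak hprev' hδnn y hynn
  have hysup : (∏ j, ⨆ v, y j v) ≤ (d:ℝ) := by
    rw [Fin.prod_univ_succ]
    have hh1 : (⨆ v, y 0 v) ≤ (d:ℝ) := ciSup_le fun v => by rw [hy0]; exact hgle v
    have hh2 : (∏ j : Fin (m+1), ⨆ v, y j.succ v) ≤ 1 := by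
      refine Finset.prod_le_one (fun j _ => Real.iSup_nonneg fun v => hynn _ v) ?_
      intro j _
      exact ciSup_le fun v => by rw [hys]; exact hx1 _ v
    have hh3 : (0:ℝ) ≤ ∏ j : Fin (m+1), ⨆ v, y j.succ v :=
      Finset.prod_nonneg fun j _ => Real.iSup_nonneg fun v => hynn _ v
    calc (⨆ v, y 0 v) * ∏ j : Fin (m+1), ⨆ v, y j.succ v
        ≤ (d:ℝ) * 1 := mul_le_mul hh1 hh2 hh3 hD0.le
      _ = (d:ℝ) := mul_one _
  have hE1' : |relApply (walkRel G (m+2)) y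
      - ((walkRel G (m+2)).card : ℝ) * (∏ j, ∑ v, |y j v|) / N ^ (m+2)|
      ≤ ε * (((m+3:ℕ):ℝ) - 2) * ((d:ℝ)^(m+2) * N) := by
    refine hE1.trans ?_
    calc ε * (((m+3:ℕ):ℝ) - 2) * ((walkRel G (m+2)).card : ℝ) * ∏ j, ⨆ v, y j v
        ≤ ε * (((m+3:ℕ):ℝ) - 2) * ((walkRel G (m+2)).card : ℝ) * (d:ℝ) := by
          refine mul_le_mul_of_nonneg_left hysup ?_
          have : (0:ℝ) ≤ ((walkRel G (m+2)).card : ℝ) := Nat.cast_nonneg _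
          exact mul_nonneg hδnn this
      _ = ε * (((m+3:ℕ):ℝ) - 2) * ((d:ℝ)^(m+2) * N) := by rw [cn]; ring
  have hyprod : (∏ j, ∑ v, |y j v|)
      = (∑ v, |g v|) * ∏ j : Fin (m+1), ∑ v, |x j.succ.succ v| := by
    rw [Fin.prod_univ_succ, hy0]
    try simp only [hys]
  have hxprod : (∏ i, ∑ v, |x i v|)
      = (∑ v, |x 0 v|) * ((∑ v, |x 1 v|) * ∏ j : Fin (m+1), ∑ v, |x j.succ.succ v|) := by
    rw [Fin.prod_univ_succ, Fin.prod_univ_succ, Fin.succ_zero_eq_one]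
  set P : ℝ := ∏ j : Fin (m+1), ∑ v, |x j.succ.succ v| with hPdef
  have hP0 : 0 < P := Finset.prod_pos fun j _ => hL0 _
  have hPN : P ≤ N^(m+1) := by
    calc P ≤ ∏ _j : Fin (m+1), N :=
          Finset.prod_le_prod (fun j _ => (hL0 _).le) (fun j _ => hL1 _)
      _ = N^(m+1) := by rw [Finset.prod_const, Finset.card_univ, Fintype.card_fin]
  set C : ℝ := ((walkRel G (m+2)).card : ℝ) * P / N ^ (m+2) with hCdef
  have hC0 : 0 < C := by rw [hCdef, cn]; positivity
  have hCd : C ≤ (d:ℝ)^(m+1) := by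
    rw [hCdef, cn, div_le_iff₀ (by positivity)]
    have hle : (d:ℝ)^(m+1) * N * P ≤ (d:ℝ)^(m+1) * N * N^(m+1) :=
      mul_le_mul_of_nonneg_left hPN (by positivity)
    exact hle.trans_eq (by ring)
  have hMT : ((walkRel G (m+2)).card : ℝ) * (∏ j, ∑ v, |y j v|) / N ^ (m+2)
        - ((walkRel G (m+3)).card : ℝ) * (∏ i, ∑ v, |x i v|) / N ^ (m+3)
      = C * (relApply (walkRel G 2) f2
          - ((walkRel G 2).card : ℝ) * (∏ i, ∑ v, |f2 i v|) / N ^ 2) := by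
    rw [hyprod, hxprod, ← step2, hprod2, hCdef, cK, cn, c2]
    field_simp
    ring
  have hE2' : |((walkRel G (m+2)).card : ℝ) * (∏ j, ∑ v, |y j v|) / N ^ (m+2)
      - ((walkRel G (m+3)).card : ℝ) * (∏ i, ∑ v, |x i v|) / N ^ (m+3)|
      < ε * ((d:ℝ)^(m+2) * N) := by
    rw [hMT, abs_mul, abs_of_pos hC0]
    calc C * |relApply (walkRel G 2) f2
          - ((walkRel G 2).card : ℝ) * (∏ i, ∑ v, |f2 i v|) / N ^ 2|
        < C * (ε * ((d:ℝ) * N)) := mul_lt_mul_of_pos_left hE2 hC0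
      _ ≤ (d:ℝ)^(m+1) * (ε * ((d:ℝ) * N)) :=
          mul_le_mul_of_nonneg_right hCd (by positivity)
      _ = ε * ((d:ℝ)^(m+2) * N) := by ring
  rw [step1]
  calc |relApply (walkRel G (m+2)) y
          - ((walkRel G (m+3)).card : ℝ) * (∏ i, ∑ v, |x i v|) / N ^ (m+3)|
      = |(relApply (walkRel G (m+2)) y
          - ((walkRel G (m+2)).card : ℝ) * (∏ j, ∑ v, |y j v|) / N ^ (m+2))
        + (((walkRel G (m+2)).card : ℝ) * (∏ j, ∑ v, |y j v|) / N ^ (m+2)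
          - ((walkRel G (m+3)).card : ℝ) * (∏ i, ∑ v, |x i v|) / N ^ (m+3))| := by
        congr 1
        ring
    _ ≤ |relApply (walkRel G (m+2)) y
          - ((walkRel G (m+2)).card : ℝ) * (∏ j, ∑ v, |y j v|) / N ^ (m+2)|
        + |((walkRel G (m+2)).card : ℝ) * (∏ j, ∑ v, |y j v|) / N ^ (m+2)
          - ((walkRel G (m+3)).card : ℝ) * (∏ i, ∑ v, |x i v|) / N ^ (m+3)| := abs_add_le _ _
    _ < ε * (((m+3:ℕ):ℝ) - 2) * ((d:ℝ)^(m+2) * N) + ε * ((d:ℝ)^(m+2) * N) :=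
        add_lt_add_of_le_of_lt hE1' hE2'
    _ = (((m+3:ℕ):ℝ) - 1) * ε * ((d:ℝ)^(m+2) * N) := by push_cast; ring
    _ = (((m+3:ℕ):ℝ) - 1) * ε * ((walkRel G (m+3)).card : ℝ) := by rw [cK]
end

section
/- Let d ≥ 1, let G be a simple undirected d-regular graph on n vertices with second eigenvalue bound |λ|, and let k ≥ 2. The k-th power relation R_k of walks of length k−1 satisfies: if (k−1)|λ|/d · t^k < 1 for a positive integer t, then any graph homomorphism-style coloring question is controlled: for any subsets S₁,…,S_k ⊆ V each of size at least n/t, there exists a walk (a₁,…,a_k) in G with aᵢ ∈ Sᵢ for all i. -/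
open Finset

attribute [local instance] Classical.propDecidable

/-- `E(A,B)`: number of ordered pairs `(a,b) ∈ A × B` with `a` adjacent to `b`. -/
noncomputable def edgeCount {V : Type*} (G : SimpleGraph V) (A B : Finset V) : ℕ :=
  ((A ×ˢ B).filter fun p => G.Adj p.1 p.2).card

section WalkProof
variable {V : Type*} [Fintype V] [Nonempty V]

/-- number of walks `a₀,…,a_j` with `aᵢ ∈ T i` and `a_j = u`. -/
noncomputable def walkF (G : SimpleGraph V) : (j : ℕ) → (Fin (j+1) → Finset V) → V → ℕ
  | 0, T, u => if u ∈ T 0 then 1 else 0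
  | (j+1), T, u =>
    if u ∈ T (Fin.last (j+1)) then
      ∑ v ∈ univ.filter (fun v => G.Adj v u), walkF G j (fun i => T i.castSucc) v
    else 0

lemma card_adj_filter (G : SimpleGraph V) {d : ℕ} (hreg : G.IsRegularOfDegree d) (u : V) :
    (univ.filter (fun v => G.Adj v u)).card = d := by
  have : univ.filter (fun v => G.Adj v u) = G.neighborFinset u := by
    ext v; simp [SimpleGraph.adj_comm]
  rw [this]
  exact hreg u

lemma walkF_le (G : SimpleGraph V) {d : ℕ} (hreg : G.IsRegularOfDegree d) :
    ∀ j (T : Fin (j+1) → Finset V) (u : V), walkF G j T u ≤ d ^ j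
  | 0, T, u => by
    simp only [walkF, pow_zero]
    split <;> omega
  | (j+1), T, u => by
    simp only [walkF]
    split
    · calc ∑ v ∈ univ.filter (fun v => G.Adj v u), walkF G j (fun i => T i.castSucc) v
          ≤ ∑ _v ∈ univ.filter (fun v => G.Adj v u), d ^ j :=
            Finset.sum_le_sum fun v _ => walkF_le G hreg j _ v
        _ = d ^ (j+1) := by rw [Finset.sum_const, card_adj_filter G hreg, smul_eq_mul]; ring
    · positivity

lemma exists_of_walkF_pos (G : SimpleGraph V) :
    ∀ j (T : Fin (j+1) → Finset V) (u : V), 0 < walkF G j T u →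
      ∃ a : Fin (j+1) → V, a (Fin.last j) = u ∧
        (∀ i : Fin (j+1), ∀ h : (i : ℕ) + 1 < j + 1, G.Adj (a i) (a ⟨(i : ℕ) + 1, h⟩)) ∧
        ∀ i, a i ∈ T i
  | 0, T, u => by
    intro h
    simp only [walkF] at h
    split at h
    · refine ⟨fun _ => u, rfl, ?_, ?_⟩
      · intro i hi; omega
      · intro i
        have : i = 0 := Fin.ext (by omega)
        rwa [this]
    · omega
  | (j+1), T, u => by
    intro h
    simp only [walkF] at h
    split at h
    case isFalse => omega
    case isTrue hu =>
      obtain ⟨v, hv, hpos⟩ : ∃ v ∈ univ.filter (fun v => G.Adj v u),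
          0 < walkF G j (fun i => T i.castSucc) v := by
        by_contra hc
        push_neg at hc
        have : ∑ v ∈ univ.filter (fun v => G.Adj v u),
            walkF G j (fun i => T i.castSucc) v = 0 :=
          Finset.sum_eq_zero fun v hv => by have := hc v hv; omega
        omega
      have hadj : G.Adj v u := by simpa using hv
      obtain ⟨b, hlast, hbadj, hbmem⟩ := exists_of_walkF_pos G j (fun i => T i.castSucc) v hpos
      refine ⟨Fin.snoc b u, Fin.snoc_last _ _, ?_, ?_⟩
      · intro i hi
        rcases i with ⟨iv, hiv⟩
        simp only [Fin.val_mk] at hi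
        rcases lt_or_eq_of_le (Nat.lt_succ_iff.mp hi) with hij | hij
        · have e1 : (Fin.snoc b u : Fin (j+2) → V) ⟨iv, hiv⟩ = b ⟨iv, by omega⟩ := by
            rw [show (⟨iv, hiv⟩ : Fin (j+2)) = (⟨iv, by omega⟩ : Fin (j+1)).castSucc from
              Fin.ext (by simp), Fin.snoc_castSucc]
          have e2 : (Fin.snoc b u : Fin (j+2) → V) ⟨iv+1, hi⟩ = b ⟨iv+1, by omega⟩ := by
            rw [show (⟨iv+1, hi⟩ : Fin (j+2)) = (⟨iv+1, by omega⟩ : Fin (j+1)).castSucc from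
              Fin.ext (by simp), Fin.snoc_castSucc]
          rw [e1, e2]
          exact hbadj ⟨iv, by omega⟩ (by simpa using hij)
        · have e1 : (Fin.snoc b u : Fin (j+2) → V) ⟨iv, hiv⟩ = b (Fin.last j) := by
            rw [show (⟨iv, hiv⟩ : Fin (j+2)) = (Fin.last j).castSucc from
              Fin.ext (by simp; omega), Fin.snoc_castSucc]
          have e2 : (Fin.snoc b u : Fin (j+2) → V) ⟨iv+1, hi⟩ = u := by
            rw [show (⟨iv+1, hi⟩ : Fin (j+2)) = Fin.last (j+1) from
              Fin.ext (by simp; omega), Fin.snoc_last]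
          rw [e1, e2, hlast]
          exact hadj
      · intro i
        induction i using Fin.lastCases with
        | last => rwa [Fin.snoc_last]
        | cast i => rw [Fin.snoc_castSucc]; exact hbmem i


omit [Nonempty V] in
lemma edgeCount_eq_sum (G : SimpleGraph V) (A B : Finset V) :
    edgeCount G A B = ∑ v ∈ A, (B.filter fun b => G.Adj v b).card := by
  rw [edgeCount, Finset.card_filter, Finset.sum_product]
  exact Finset.sum_congr rfl fun a _ => (Finset.card_filter _ _).symm

/-- Weighted expander mixing: `f` integer-valued bounded by `M`. -/
lemma weighted_mixing (G : SimpleGraph V) (d : ℕ) (lam : ℝ) (hlam : 0 ≤ lam)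
    (hmix : ∀ A B : Finset V,
      |(edgeCount G A B : ℝ) - (d : ℝ) * A.card * B.card / (Fintype.card V : ℝ)| ≤
        lam * Real.sqrt ((A.card : ℝ) * B.card))
    (f : V → ℕ) (M : ℕ) (hf : ∀ v, f v ≤ M) (S : Finset V) :
    |(∑ v, (f v : ℝ) * ((S.filter fun b => G.Adj v b).card : ℝ))
      - (d : ℝ) * S.card * (∑ v, (f v : ℝ)) / (Fintype.card V : ℝ)|
    ≤ (M : ℝ) * lam * (Fintype.card V : ℝ) := by
  set n : ℝ := (Fintype.card V : ℝ) with hn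
  set A : ℕ → Finset V := fun s => univ.filter fun v => s < f v with hA
  have hfv : ∀ v, (f v : ℝ) = ∑ s ∈ range M, if v ∈ A s then (1:ℝ) else 0 := by
    intro v
    rw [Finset.sum_boole]
    have : (range M).filter (fun s => v ∈ A s) = range (f v) := by
      ext s
      simp only [mem_filter, mem_range, hA, mem_univ, true_and]
      constructor
      · rintro ⟨_, h⟩; exact h
      · intro h; exact ⟨lt_of_lt_of_le h (hf v), h⟩
    rw [this, Finset.card_range]
  have hE : ∀ s, (edgeCount G (A s) S : ℝ)
      = ∑ v, (if v ∈ A s then (1:ℝ) else 0) * ((S.filter fun b => G.Adj v b).card : ℝ) := by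
    intro s
    rw [edgeCount_eq_sum]
    push_cast
    conv_lhs => rw [hA]
    rw [Finset.sum_filter]
    apply Finset.sum_congr rfl
    intro v _
    by_cases h : v ∈ A s
    · have h' : s < f v := by simpa [hA] using h
      simp [h, h']
    · have h' : ¬ s < f v := by simpa [hA] using h
      simp [h, h']
  have h1 : (∑ v, (f v : ℝ) * ((S.filter fun b => G.Adj v b).card : ℝ))
      = ∑ s ∈ range M, (edgeCount G (A s) S : ℝ) := by
    calc ∑ v, (f v : ℝ) * ((S.filter fun b => G.Adj v b).card : ℝ)
        = ∑ v, ∑ s ∈ range M,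
            (if v ∈ A s then (1:ℝ) else 0) * ((S.filter fun b => G.Adj v b).card : ℝ) := by
          refine Finset.sum_congr rfl fun v _ => ?_
          rw [hfv v, Finset.sum_mul]
      _ = ∑ s ∈ range M, ∑ v,
            (if v ∈ A s then (1:ℝ) else 0) * ((S.filter fun b => G.Adj v b).card : ℝ) :=
          Finset.sum_comm
      _ = ∑ s ∈ range M, (edgeCount G (A s) S : ℝ) := by
          exact Finset.sum_congr rfl fun s _ => (hE s).symm
  have h2 : (∑ v, (f v : ℝ)) = ∑ s ∈ range M, ((A s).card : ℝ) := by
    calc ∑ v, (f v : ℝ)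
        = ∑ v, ∑ s ∈ range M, (if v ∈ A s then (1:ℝ) else 0) :=
          Finset.sum_congr rfl fun v _ => hfv v
      _ = ∑ s ∈ range M, ∑ v, (if v ∈ A s then (1:ℝ) else 0) := Finset.sum_comm
      _ = ∑ s ∈ range M, ((A s).card : ℝ) := by
          refine Finset.sum_congr rfl fun s _ => ?_
          rw [Finset.sum_boole]
          congr 1
          rw [Finset.filter_univ_mem]
  rw [h1, h2]
  have expand : (d : ℝ) * S.card * (∑ s ∈ range M, ((A s).card : ℝ)) / n
      = ∑ s ∈ range M, (d : ℝ) * ((A s).card : ℝ) * S.card / n := by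
    rw [Finset.mul_sum, Finset.sum_div]
    exact Finset.sum_congr rfl fun s _ => by ring
  rw [expand, ← Finset.sum_sub_distrib]
  have hcardn : ∀ B : Finset V, (B.card : ℝ) ≤ n := by
    intro B
    rw [hn]
    exact_mod_cast Finset.card_le_univ B
  have hn0 : 0 ≤ n := by positivity
  calc |∑ s ∈ range M, ((edgeCount G (A s) S : ℝ) - (d:ℝ) * ((A s).card : ℝ) * S.card / n)|
      ≤ ∑ s ∈ range M, |(edgeCount G (A s) S : ℝ) - (d:ℝ) * ((A s).card : ℝ) * S.card / n| :=
        Finset.abs_sum_le_sum_abs _ _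
    _ ≤ ∑ s ∈ range M, lam * n := by
        refine Finset.sum_le_sum fun s _ => (hmix (A s) S).trans ?_
        have : Real.sqrt (((A s).card : ℝ) * S.card) ≤ n := by
          have h1 : ((A s).card : ℝ) * S.card ≤ n * n :=
            mul_le_mul (hcardn _) (hcardn _) (by positivity) hn0
          calc Real.sqrt (((A s).card : ℝ) * S.card) ≤ Real.sqrt (n * n) :=
                Real.sqrt_le_sqrt h1
            _ = n := Real.sqrt_mul_self hn0
        exact mul_le_mul_of_nonneg_left this hlam
    _ = (M : ℝ) * lam * n := by rw [Finset.sum_const, Finset.card_range, nsmul_eq_mul]; ring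


set_option maxHeartbeats 800000 in
lemma walkF_sum_bound (G : SimpleGraph V) (d : ℕ) (hd : 0 < d)
    (hreg : G.IsRegularOfDegree d) (lam : ℝ) (hlam : 0 ≤ lam)
    (hmix : ∀ A B : Finset V,
      |(edgeCount G A B : ℝ) - (d : ℝ) * A.card * B.card / (Fintype.card V : ℝ)| ≤
        lam * Real.sqrt ((A.card : ℝ) * B.card)) :
    ∀ j (T : Fin (j+1) → Finset V),
      |(∑ u, (walkF G j T u : ℝ))
          - (d : ℝ) ^ j * (∏ i, ((T i).card : ℝ)) / (Fintype.card V : ℝ) ^ j|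
        ≤ (j : ℝ) * lam * (d : ℝ) ^ j * (Fintype.card V : ℝ) / d
  | 0, T => by
    have h1 : (∑ u, (walkF G 0 T u : ℝ)) = ((T 0).card : ℝ) := by
      simp [walkF, Finset.sum_boole, Finset.filter_univ_mem]
    rw [h1, Fin.prod_univ_one]
    simp
  | (j+1), T => by
    have hd' : (0:ℝ) < d := by exact_mod_cast hd
    set n : ℝ := (Fintype.card V : ℝ) with hn
    have hn' : (0:ℝ) < n := by rw [hn]; exact_mod_cast Fintype.card_pos
    set T' : Fin (j+1) → Finset V := fun i => T i.castSucc with hT'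
    set Sl : Finset V := T (Fin.last (j+1)) with hSl
    set f : V → ℕ := walkF G j T' with hf
    set W : ℝ := ∑ v, (f v : ℝ) with hW
    set P : ℝ := (d : ℝ) ^ j * (∏ i, ((T' i).card : ℝ)) / n ^ j with hP
    -- step 1 : sum rewriting
    have hsumN : (∑ u, walkF G (j+1) T u)
        = ∑ v, f v * (Sl.filter fun b => G.Adj v b).card := by
      calc ∑ u, walkF G (j+1) T u
          = ∑ u, (if u ∈ Sl then ∑ v ∈ univ.filter (fun v => G.Adj v u), f v else 0) := rfl
        _ = ∑ u ∈ Sl, ∑ v ∈ univ.filter (fun v => G.Adj v u), f v := by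
            rw [← Finset.sum_filter, Finset.filter_univ_mem]
        _ = ∑ u ∈ Sl, ∑ v, if G.Adj v u then f v else 0 := by
            exact Finset.sum_congr rfl fun u _ => by rw [Finset.sum_filter]
        _ = ∑ v, ∑ u ∈ Sl, if G.Adj v u then f v else 0 := Finset.sum_comm
        _ = ∑ v, f v * (Sl.filter fun b => G.Adj v b).card := by
            refine Finset.sum_congr rfl fun v _ => ?_
            rw [← Finset.sum_filter, Finset.sum_const, smul_eq_mul, mul_comm]
    have hsum : (∑ u, (walkF G (j+1) T u : ℝ))
        = ∑ v, (f v : ℝ) * ((Sl.filter fun b => G.Adj v b).card : ℝ) := by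
      rw [← Nat.cast_sum, hsumN]
      push_cast
      ring_nf
    -- step 2 : mixing
    have hmixf := weighted_mixing G d lam hlam hmix f (d ^ j)
      (fun v => walkF_le G hreg j T' v) Sl
    -- step 3 : induction hypothesis
    have hIH := walkF_sum_bound G d hd hreg lam hlam hmix j T'
    -- the product splits
    have hprod : (∏ i, ((T i).card : ℝ)) = (∏ i, ((T' i).card : ℝ)) * (Sl.card : ℝ) := by
      rw [Fin.prod_univ_castSucc]
    set c : ℝ := (d : ℝ) * Sl.card / n with hc
    have hc0 : 0 ≤ c := by positivity
    have hcd : c ≤ d := by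
      rw [hc, div_le_iff₀ hn']
      have : (Sl.card : ℝ) ≤ n := by rw [hn]; exact_mod_cast Finset.card_le_univ Sl
      nlinarith
    have htarget : (d : ℝ) ^ (j+1) * (∏ i, ((T i).card : ℝ)) / n ^ (j+1) = c * P := by
      rw [hprod, hP, hc, div_mul_div_comm]
      congr 1 <;> ring
    rw [hsum, htarget]
    have tri : |(∑ v, (f v : ℝ) * ((Sl.filter fun b => G.Adj v b).card : ℝ)) - c * P|
        ≤ |(∑ v, (f v : ℝ) * ((Sl.filter fun b => G.Adj v b).card : ℝ)) - c * W|
          + c * |W - P| := by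
      have h1 : |c * W - c * P| = c * |W - P| := by
        rw [← mul_sub, abs_mul, abs_of_nonneg hc0]
      calc |(∑ v, (f v : ℝ) * ((Sl.filter fun b => G.Adj v b).card : ℝ)) - c * P|
          ≤ |(∑ v, (f v : ℝ) * ((Sl.filter fun b => G.Adj v b).card : ℝ)) - c * W|
            + |c * W - c * P| := abs_sub_le _ _ _
        _ = _ := by rw [h1]
    have e1 : |(∑ v, (f v : ℝ) * ((Sl.filter fun b => G.Adj v b).card : ℝ)) - c * W|
        ≤ ((d:ℝ)^j) * lam * n := by
      have hcw : c * W = (d : ℝ) * Sl.card * W / n := by rw [hc]; ring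
      rw [hcw, hW, hn]
      push_cast at hmixf ⊢
      exact hmixf
    have e2 : c * |W - P| ≤ (j : ℝ) * lam * (d:ℝ)^j * n := by
      calc c * |W - P| ≤ (d:ℝ) * ((j : ℝ) * lam * (d : ℝ) ^ j * n / d) := by
            apply mul_le_mul hcd hIH (abs_nonneg _) (le_of_lt hd')
        _ = (j : ℝ) * lam * (d:ℝ)^j * n := by field_simp
    calc |(∑ v, (f v : ℝ) * ((Sl.filter fun b => G.Adj v b).card : ℝ)) - c * P|
        ≤ ((d:ℝ)^j) * lam * n + (j : ℝ) * lam * (d:ℝ)^j * n := by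
          have := tri
          linarith
      _ = ((j:ℕ)+1 : ℝ) * lam * (d : ℝ) ^ (j+1) * n / d := by
          field_simp
          ring
      _ = ((j+1:ℕ) : ℝ) * lam * (d : ℝ) ^ (j+1) * n / d := by push_cast; ring


end WalkProof

/-- If `(k−1)·(|λ|/d)·t^k < 1` for a `d`-regular graph satisfying the Expander Mixing
Lemma with eigenvalue bound `λ`, then for any subsets `S₁,…,S_k` of the vertices, each of
size at least `n/t`, there is a walk `(a₁,…,a_k)` in `G` with `aᵢ ∈ Sᵢ` for all `i`. -/
theorem exists_walk_through_large_sets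
    {V : Type*} [Fintype V] [Nonempty V]
    (G : SimpleGraph V) (d : ℕ) (hd : 0 < d) (hreg : G.IsRegularOfDegree d)
    (lam : ℝ) (hlam : 0 < lam)
    (hmix : ∀ A B : Finset V,
      |(edgeCount G A B : ℝ) - (d : ℝ) * A.card * B.card / (Fintype.card V : ℝ)| ≤
        lam * Real.sqrt ((A.card : ℝ) * B.card))
    (k t : ℕ) (hk : 2 ≤ k) (ht : 0 < t)
    (hsmall : ((k : ℝ) - 1) * (lam / d) * (t : ℝ) ^ k < 1)
    (S : Fin k → Finset V)
    (hS : ∀ i, (Fintype.card V : ℝ) / (t : ℝ) ≤ ((S i).card : ℝ)) :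
    ∃ a : Fin k → V,
      (∀ i : Fin k, ∀ h : (i : ℕ) + 1 < k, G.Adj (a i) (a ⟨(i : ℕ) + 1, h⟩)) ∧
      ∀ i, a i ∈ S i := by
  classical
  obtain ⟨j, rfl⟩ : ∃ j, k = j + 1 := ⟨k - 1, by omega⟩
  set n : ℝ := (Fintype.card V : ℝ) with hn
  have hn' : (0:ℝ) < n := by rw [hn]; exact_mod_cast Fintype.card_pos
  have hd' : (0:ℝ) < d := by exact_mod_cast hd
  have ht' : (0:ℝ) < t := by exact_mod_cast ht
  have hj1 : 1 ≤ j := by omega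
  set W : ℝ := ∑ u, (walkF G j S u : ℝ) with hW
  have hbound := walkF_sum_bound G d hd hreg lam (le_of_lt hlam) hmix j S
  -- the product is large
  have hprod : (n / t) ^ (j+1) ≤ ∏ i, ((S i).card : ℝ) := by
    have : ∏ _i : Fin (j+1), (n / t) ≤ ∏ i, ((S i).card : ℝ) :=
      Finset.prod_le_prod (fun i _ => by positivity) (fun i _ => hS i)
    simpa [div_pow] using this
  have hmain : (d:ℝ)^j * n / (t:ℝ)^(j+1) ≤ (d : ℝ) ^ j * (∏ i, ((S i).card : ℝ)) / n ^ j := by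
    have heq : (d:ℝ)^j * n / (t:ℝ)^(j+1) = (d:ℝ)^j * ((n/t)^(j+1)) / n^j := by
      rw [div_pow]
      field_simp
      ring
    rw [heq]
    gcongr
  have hsm' : (j:ℝ) * lam * (t:ℝ)^(j+1) < d := by
    have h := hsmall
    push_cast at h
    have h2 : (j:ℝ) * lam * (t:ℝ)^(j+1) / d < 1 := by
      calc (j:ℝ) * lam * (t:ℝ)^(j+1) / d
          = ((j:ℝ) + 1 - 1) * (lam / d) * (t:ℝ)^(j+1) := by ring
        _ < 1 := h
    rwa [div_lt_one hd'] at h2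
  have hkey : (j:ℝ) * lam * (d:ℝ)^j * n / d < (d:ℝ)^j * n / (t:ℝ)^(j+1) := by
    rw [div_lt_div_iff₀ hd' (by positivity)]
    nlinarith [mul_lt_mul_of_pos_left hsm' (show (0:ℝ) < (d:ℝ)^j * n by positivity)]
  have hWpos : 0 < W := by
    have h1 := (abs_le.mp hbound).1
    linarith
  have hex : ∃ u, 0 < walkF G j S u := by
    by_contra hc
    push_neg at hc
    have hzero : W = 0 := by
      rw [hW]
      apply Finset.sum_eq_zero
      intro u _
      have h := Nat.le_zero.mp (hc u)
      rw [h]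
      norm_num
    linarith
  obtain ⟨u, hu⟩ := hex
  obtain ⟨a, _, hadj, hmem⟩ := exists_of_walkF_pos G j S u hu
  exact ⟨a, hadj, hmem⟩
end
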